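/- Let p ≥ 2, let f₀(τ) = Σ_{k=1}^∞ e^{√k/2} τ^k, let g(t) = ln( μ_{f₀}(t)/(1−t) ) be increasing on (1/2,1) with inverse g⁻¹, and suppose t* ∈ (1/2,1) is such that for all t ∈ (t*,1): g⁻¹(3g(t)) − g⁻¹(g(t)/3) > 1 − g⁻¹(3g(t)). Define E* = { r ∈ [0,1)^p : r₁ ∈ (t*,1) and r_i ∈ ( g⁻¹(g(r₁)/3), g⁻¹(3 g(r₁)) ) for i = 2,…,p }. Then E* has infinite logarithmic measure: ∫_{E*} Π_{i=1}^p dr_i/(1−r_i) = ∫_{t*}^1 ( ln( (1 − g⁻¹(g(r₁)/3)) / (1 − g⁻¹(3g(r₁))) ) )^{p−1} dr₁/(1−r₁) = +∞; in particular E* ∉ Υ, i.e. ∫_{E* ∩ △_{r₀}} Π dr_i/(1−r_i) = +∞ for every r₀ ∈ [0,1)^p with g⁻¹(g(t*)/3) > max_j (r₀)_j. -/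

import Mathlib

open MeasureTheory Set

/-- Maximal term of the power series with coefficients `a`. -/
noncomputable def maxTerm (a : ℕ → ℂ) (r : ℝ) : ℝ :=
  ⨆ n : ℕ, ‖a n‖ * r ^ n

/-- Coefficients of `f₀(τ) = ∑_{k=1}^∞ e^{√k/2} τ^k`. -/
noncomputable def f0Coef : ℕ → ℂ := fun k =>
  if k = 0 then 0 else (Real.exp (Real.sqrt k / 2) : ℂ)

/-- `g(t) = ln(μ_{f₀}(t)/(1−t))`. -/
noncomputable def gFun (t : ℝ) : ℝ := Real.log (maxTerm f0Coef t / (1 - t))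

/-- `E* = {r ∈ [0,1)^p : r₁ ∈ (t*,1), r_i ∈ (g⁻¹(g(r₁)/3), g⁻¹(3g(r₁))) for i ≥ 2}`. -/
def Estar (p : ℕ) [NeZero p] (ginv : ℝ → ℝ) (tstar : ℝ) : Set (Fin p → ℝ) :=
  {r | (∀ j, r j ∈ Set.Ico (0:ℝ) 1) ∧ r 0 ∈ Set.Ioo tstar 1 ∧
    ∀ i, i ≠ 0 → r i ∈ Set.Ioo (ginv (gFun (r 0) / 3)) (ginv (3 * gFun (r 0)))}

lemma f0_abs (n : ℕ) :
    ‖f0Coef n‖ = if n = 0 then 0 else Real.exp (Real.sqrt n / 2) := by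
  unfold f0Coef
  split
  · simp
  · rw [Complex.norm_real, Real.norm_of_nonneg (Real.exp_pos _).le]

lemma sqrt_le_lin {x ε : ℝ} (hx : 0 ≤ x) (hε : 0 < ε) :
    Real.sqrt x ≤ (ε * x + 1 / ε) / 2 := by
  have h1 : Real.sqrt (ε * x) * Real.sqrt (1 / ε) = Real.sqrt x := by
    rw [← Real.sqrt_mul (by positivity)]
    congr 1
    field_simp
  have h2 := two_mul_le_add_sq (Real.sqrt (ε * x)) (Real.sqrt (1 / ε))
  rw [sq, sq, Real.mul_self_sqrt (by positivity), Real.mul_self_sqrt (by positivity)] at h2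
  nlinarith [Real.sqrt_nonneg x]

lemma expSqrt_term_le {q : ℝ} (h0 : 0 < q) (h1 : q < 1) (n : ℕ) :
    Real.exp (Real.sqrt n / 2) * q ^ n ≤ Real.exp (-1 / (8 * Real.log q)) := by
  have hl : Real.log q < 0 := Real.log_neg h0 h1
  set l := Real.log q with hldef
  have hε : 0 < -2 * l := by linarith
  have hq : q ^ n = Real.exp (n * l) := by
    rw [← Real.exp_log h0, ← Real.exp_nat_mul]
  rw [hq, ← Real.exp_add]
  apply Real.exp_le_exp.2
  have hsq := sqrt_le_lin (x := (n : ℝ)) (by positivity) hε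
  have hne : (8 : ℝ) * l ≠ 0 := by
    intro h; nlinarith
  have hu : (1 / (-2 * l)) * (-2 * l) = 1 := div_mul_cancel₀ 1 (ne_of_gt hε)
  have key : Real.sqrt n / 2 + n * l ≤ 1 / (4 * (-2 * l)) := by
    have hn : (0:ℝ) ≤ n := by positivity
    have h4 : 1 / (4 * (-2 * l)) = (1 / (-2 * l)) / 4 := by ring
    rw [h4]
    nlinarith [hsq, mul_nonneg hn (le_of_lt hε)]
  calc Real.sqrt n / 2 + n * l ≤ 1 / (4 * (-2 * l)) := key
    _ = -1 / (8 * l) := by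
        have h5 : 4 * (-2 * l) = -(8 * l) := by ring
        rw [h5, div_neg, neg_div]

lemma f0term_le {q : ℝ} (h0 : 0 < q) (h1 : q < 1) (n : ℕ) :
    ‖f0Coef n‖ * q ^ n ≤ Real.exp (-1 / (8 * Real.log q)) := by
  rw [f0_abs]
  split
  · simp [Real.exp_pos, le_of_lt (Real.exp_pos _)]
  · exact expSqrt_term_le h0 h1 n

lemma bddAbove_terms {r : ℝ} (h0 : 0 ≤ r) (h1 : r < 1) :
    BddAbove (Set.range fun n : ℕ => ‖f0Coef n‖ * r ^ n) := by
  rcases eq_or_lt_of_le h0 with h | h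
  · refine ⟨Real.exp (1/2), ?_⟩
    rintro x ⟨n, rfl⟩
    cases n with
    | zero => simp [f0_abs]; positivity
    | succ m =>
      simp only [← h, zero_pow (Nat.succ_ne_zero m), mul_zero]
      positivity
  · exact ⟨Real.exp (-1 / (8 * Real.log r)), by rintro x ⟨n, rfl⟩; exact f0term_le h h1 n⟩

lemma maxTerm_ge {r : ℝ} (h0 : 0 ≤ r) (h1 : r < 1) :
    Real.exp (1/2) * r ≤ maxTerm f0Coef r := by
  calc Real.exp (1/2) * r = ‖f0Coef 1‖ * r ^ 1 := by
        rw [f0_abs]; norm_num [Real.sqrt_one]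
    _ ≤ maxTerm f0Coef r := le_ciSup (bddAbove_terms h0 h1) 1

lemma maxTerm_nonneg {r : ℝ} (h0 : 0 ≤ r) (h1 : r < 1) : 0 ≤ maxTerm f0Coef r :=
  le_trans (by positivity) (maxTerm_ge h0 h1)

lemma maxTerm_pos {r : ℝ} (h0 : 0 < r) (h1 : r < 1) : 0 < maxTerm f0Coef r :=
  lt_of_lt_of_le (by positivity) (maxTerm_ge h0.le h1)

lemma maxTerm_ratio {t t' : ℝ} (h0 : 0 ≤ t) (h : t ≤ t') (h2 : 0 < t') (h1 : t' < 1) :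
    maxTerm f0Coef t ≤ (t / t') * maxTerm f0Coef t' := by
  have hμ' := maxTerm_pos h2 h1
  have hrat0 : 0 ≤ t / t' := by positivity
  have hrat1 : t / t' ≤ 1 := div_le_one_of_le₀ h h2.le
  apply ciSup_le
  intro n
  cases n with
  | zero => simp [f0_abs]; positivity
  | succ m =>
    have hterm : ‖f0Coef (m+1)‖ * t ^ (m+1)
        = (‖f0Coef (m+1)‖ * t' ^ (m+1)) * (t / t') ^ (m+1) := by
      rw [mul_assoc, ← mul_pow, mul_div_assoc', mul_comm t' t, mul_div_assoc,
        div_self (ne_of_gt h2), mul_one]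
    rw [hterm]
    have h3 : (t / t') ^ (m+1) ≤ t / t' := pow_le_of_le_one hrat0 hrat1 (Nat.succ_ne_zero m)
    have h4 : ‖f0Coef (m+1)‖ * t' ^ (m+1) ≤ maxTerm f0Coef t' :=
      le_ciSup (bddAbove_terms (le_of_lt h2) h1) (m+1)
    calc (‖f0Coef (m+1)‖ * t' ^ (m+1)) * (t / t') ^ (m+1)
        ≤ maxTerm f0Coef t' * (t / t') := by
          apply mul_le_mul h4 h3 (by positivity) (le_of_lt hμ')
      _ = (t / t') * maxTerm f0Coef t' := mul_comm _ _

lemma exp_half_gt : (3/2 : ℝ) ≤ Real.exp (1/2) := by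
  have := Real.add_one_le_exp (1/2 : ℝ)
  linarith

lemma maxTerm_big {t : ℝ} (h0 : 1/2 < t) (h1 : t < 1) : 3/4 < maxTerm f0Coef t := by
  have h := maxTerm_ge (by linarith) h1
  nlinarith [exp_half_gt, Real.exp_pos (1/2 : ℝ)]

lemma gFun_pos {t : ℝ} (h : t ∈ Set.Ioo (1/2 : ℝ) 1) : 0 < gFun t := by
  obtain ⟨h0, h1⟩ := h
  apply Real.log_pos
  rw [lt_div_iff₀ (by linarith)]
  have := maxTerm_big h0 h1
  linarith

lemma gFun_strictMonoOn : StrictMonoOn gFun (Set.Ioo (1/2 : ℝ) 1) := by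
  intro t ht t' ht' hlt
  have h2 : 0 < t' := by linarith [ht'.1]
  have hμ' := maxTerm_pos h2 ht'.2
  have hμpos : 0 < maxTerm f0Coef t := maxTerm_pos (by linarith [ht.1]) ht.2
  have hr := maxTerm_ratio (by linarith [ht.1] : (0:ℝ) ≤ t) hlt.le h2 ht'.2
  have hμlt : maxTerm f0Coef t < maxTerm f0Coef t' := by
    have : t / t' < 1 := (div_lt_one h2).2 hlt
    nlinarith
  have h1t : (0:ℝ) < 1 - t := by linarith [ht.2]
  have h1t' : (0:ℝ) < 1 - t' := by linarith [ht'.2]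
  apply Real.log_lt_log (by positivity)
  calc maxTerm f0Coef t / (1 - t) < maxTerm f0Coef t' / (1 - t) :=
        (div_lt_div_iff_of_pos_right h1t).2 hμlt
    _ ≤ maxTerm f0Coef t' / (1 - t') :=
        div_le_div_of_nonneg_left (le_of_lt hμ') h1t' (by linarith)

lemma tail_small {b : ℝ} (hb0 : 1/2 < b) (hb : b < 1) :
    ∃ N : ℕ, 2 ≤ N ∧ ∀ t, 0 ≤ t → t ≤ b → ∀ n, N ≤ n →
      ‖f0Coef n‖ * t ^ n ≤ 7/10 := by
  have hb0' : (0:ℝ) < b := by linarith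
  have hsb0 : 0 < Real.sqrt b := Real.sqrt_pos.2 hb0'
  have hsb1 : Real.sqrt b < 1 := by
    rw [show (1:ℝ) = Real.sqrt 1 by simp]
    exact Real.sqrt_lt_sqrt (by positivity) hb
  set D := Real.exp (-1 / (8 * Real.log (Real.sqrt b))) with hD
  have hDpos : 0 < D := Real.exp_pos _
  obtain ⟨N₀, hN₀⟩ := exists_pow_lt_of_lt_one (x := (7/10) / D) (by positivity) hsb1
  refine ⟨max N₀ 2, le_max_right _ _, ?_⟩
  intro t ht0 htb n hn
  have key : ∀ m : ℕ, ‖f0Coef m‖ * b ^ m ≤ D * Real.sqrt b ^ m := by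
    intro m
    have hbm : b ^ m = Real.sqrt b ^ m * Real.sqrt b ^ m := by
      rw [← mul_pow, Real.mul_self_sqrt hb0'.le]
    have h1 : ‖f0Coef m‖ * Real.sqrt b ^ m ≤ D := f0term_le hsb0 hsb1 m
    calc ‖f0Coef m‖ * b ^ m
        = (‖f0Coef m‖ * Real.sqrt b ^ m) * Real.sqrt b ^ m := by
          rw [hbm]; ring
      _ ≤ D * Real.sqrt b ^ m := by
          apply mul_le_mul_of_nonneg_right h1 (by positivity)
  have habs : 0 ≤ ‖f0Coef n‖ := norm_nonneg _
  calc ‖f0Coef n‖ * t ^ n ≤ ‖f0Coef n‖ * b ^ n := by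
        apply mul_le_mul_of_nonneg_left (pow_le_pow_left₀ ht0 htb n) habs
    _ ≤ D * Real.sqrt b ^ n := key n
    _ ≤ D * Real.sqrt b ^ N₀ := by
        apply mul_le_mul_of_nonneg_left _ hDpos.le
        exact pow_le_pow_of_le_one hsb0.le hsb1.le (le_trans (le_max_left _ _) hn)
    _ ≤ D * ((7/10) / D) := mul_le_mul_of_nonneg_left hN₀.le hDpos.le
    _ = 7/10 := by rw [mul_comm, div_mul_cancel₀ _ (ne_of_gt hDpos)]

lemma finite_rep {b : ℝ} (hb0 : 1/2 < b) (hb : b < 1) :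
    ∃ N : ℕ, ∃ hN : 2 ≤ N, ∀ t ∈ Set.Ioo (1/2 : ℝ) b, maxTerm f0Coef t
      = (Finset.range N).sup' (Finset.nonempty_range_iff.mpr (by omega))
        (fun n => ‖f0Coef n‖ * t ^ n) := by
  obtain ⟨N, hN2, htail⟩ := tail_small hb0 hb
  refine ⟨N, hN2, ?_⟩
  intro t ⟨ht0, htb⟩
  have ht0' : (0:ℝ) ≤ t := by linarith
  have ht1 : t < 1 := lt_trans htb hb
  have hmem1 : 1 ∈ Finset.range N := Finset.mem_range.2 (by omega)
  have hne : (Finset.range N).Nonempty := ⟨1, hmem1⟩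
  apply le_antisymm
  · apply ciSup_le
    intro n
    rcases lt_or_ge n N with h | h
    · exact Finset.le_sup' (fun n => ‖f0Coef n‖ * t ^ n) (Finset.mem_range.2 h)
    · have h1 : ‖f0Coef n‖ * t ^ n ≤ 7/10 := htail t ht0' htb.le n h
      have h2 : (7/10 : ℝ) ≤ ‖f0Coef 1‖ * t ^ 1 := by
        rw [f0_abs]
        simp only [Real.sqrt_one, if_neg one_ne_zero, pow_one, Nat.cast_one]
        nlinarith [exp_half_gt, Real.exp_pos (1/2:ℝ)]
      exact le_trans h1 (le_trans h2 (Finset.le_sup' (fun n => ‖f0Coef n‖ * t ^ n) hmem1))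
  · apply Finset.sup'_le
    intro n _
    exact le_ciSup (bddAbove_terms ht0' ht1) n

lemma maxTerm_continuousAt {t₀ : ℝ} (h : t₀ ∈ Set.Ioo (1/2 : ℝ) 1) :
    ContinuousAt (maxTerm f0Coef) t₀ := by
  obtain ⟨h0, h1⟩ := h
  set b := (t₀ + 1) / 2 with hbdef
  have hb0 : 1/2 < b := by simp only [hbdef]; linarith
  have hb1 : b < 1 := by simp only [hbdef]; linarith
  obtain ⟨N, hN2, hrep⟩ := finite_rep hb0 hb1
  have hne : (Finset.range N).Nonempty := ⟨1, Finset.mem_range.2 (by omega)⟩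
  have hcont : ContinuousAt
      (fun t => (Finset.range N).sup' hne (fun n => ‖f0Coef n‖ * t ^ n)) t₀ := by
    apply ContinuousAt.finset_sup'_apply hne
    intro i _
    fun_prop
  apply hcont.congr
  have hopen : IsOpen (Set.Ioo (1/2 : ℝ) b) := isOpen_Ioo
  have hmem : t₀ ∈ Set.Ioo (1/2 : ℝ) b := ⟨h0, by simp only [hbdef]; linarith⟩
  filter_upwards [hopen.mem_nhds hmem] with t ht
  exact (hrep t ht).symm

lemma gFun_continuousAt {t₀ : ℝ} (h : t₀ ∈ Set.Ioo (1/2 : ℝ) 1) :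
    ContinuousAt gFun t₀ := by
  have h1 : ContinuousAt (fun t => maxTerm f0Coef t / (1 - t)) t₀ := by
    apply ContinuousAt.div (maxTerm_continuousAt h) (by fun_prop)
    intro hc
    rw [sub_eq_zero] at hc
    linarith [h.2, hc]
  apply ContinuousAt.comp _ h1
  apply Real.continuousAt_log
  have := maxTerm_pos (by linarith [h.1] : (0:ℝ) < t₀) h.2
  have h2 : (0:ℝ) < 1 - t₀ := by linarith [h.2]
  positivity

lemma gFun_unbounded {x : ℝ} (hx : x ∈ Set.Ioo (1/2 : ℝ) 1) (M : ℝ) :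
    ∃ w, x < w ∧ w < 1 ∧ M < gFun w := by
  set η := Real.exp (Real.log (3/4) - M) with hη
  have hηpos : 0 < η := Real.exp_pos _
  set w := max ((x + 1) / 2) (1 - η / 2) with hw
  have hw1 : w < 1 := by
    apply max_lt (by linarith [hx.2]) (by linarith)
  have hwx : x < w := lt_of_lt_of_le (by linarith [hx.2]) (le_max_left _ _)
  have hw2 : 1/2 < w := lt_trans hx.1 hwx
  have hwη : 1 - w < η := by
    have : 1 - η / 2 ≤ w := le_max_right _ _
    linarith
  refine ⟨w, hwx, hw1, ?_⟩
  have h1w : (0:ℝ) < 1 - w := by linarith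
  have hub : 3/4 < maxTerm f0Coef w := maxTerm_big hw2 hw1
  have step1 : Real.log ((3/4) / (1 - w)) ≤ gFun w := by
    apply Real.log_le_log (by positivity)
    gcongr
  have step2 : M < Real.log ((3/4) / (1 - w)) := by
    rw [Real.log_div (by norm_num) (ne_of_gt h1w)]
    have : Real.log (1 - w) < Real.log η := Real.log_lt_log h1w hwη
    rw [hη, Real.log_exp] at this
    linarith
  linarith

lemma exists_beta {x : ℝ} (hx : x ∈ Set.Ioo (1/2 : ℝ) 1) :
    ∃ s, x < s ∧ s < 1 ∧ gFun s = 3 * gFun x := by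
  obtain ⟨w, hxw, hw1, hMw⟩ := gFun_unbounded hx (3 * gFun x)
  have hsub : Set.Icc x w ⊆ Set.Ioo (1/2 : ℝ) 1 := fun z hz => ⟨lt_of_lt_of_le hx.1 hz.1, lt_of_le_of_lt hz.2 hw1⟩
  have hcont : ContinuousOn gFun (Set.Icc x w) := fun z hz =>
    (gFun_continuousAt (hsub hz)).continuousWithinAt
  have hmm : 3 * gFun x ∈ Set.Ioo (gFun x) (gFun w) := by
    constructor
    · nlinarith [gFun_pos hx]
    · exact hMw
  have := intermediate_value_Ioo hxw.le hcont hmm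
  obtain ⟨s, hs, hgs⟩ := this
  exact ⟨s, hs.1, lt_trans hs.2 hw1, hgs⟩

noncomputable def betaFun : ℝ → ℝ := fun x =>
  if h : x ∈ Set.Ioo (1/2 : ℝ) 1 then (exists_beta h).choose
  else if x ≤ 1/2 then 1/2 else 1

lemma betaFun_spec {x : ℝ} (h : x ∈ Set.Ioo (1/2 : ℝ) 1) :
    x < betaFun x ∧ betaFun x < 1 ∧ gFun (betaFun x) = 3 * gFun x := by
  rw [betaFun, dif_pos h]
  exact (exists_beta h).choose_spec

lemma betaFun_mem {x : ℝ} (h : x ∈ Set.Ioo (1/2 : ℝ) 1) :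
    betaFun x ∈ Set.Ioo (1/2 : ℝ) 1 :=
  ⟨lt_trans h.1 (betaFun_spec h).1, (betaFun_spec h).2.1⟩

lemma betaFun_eq_half {x : ℝ} (hx : x ≤ 1/2) : betaFun x = 1/2 := by
  have hnot : x ∉ Set.Ioo (1/2 : ℝ) 1 := fun h => absurd h.1 (not_lt.2 hx)
  simp only [betaFun]
  rw [dif_neg hnot, if_pos hx]

lemma betaFun_eq_one {x : ℝ} (hx : 1 ≤ x) : betaFun x = 1 := by
  have hnot : x ∉ Set.Ioo (1/2 : ℝ) 1 := fun h => absurd h.2 (not_lt.2 hx)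
  simp only [betaFun]
  rw [dif_neg hnot, if_neg (by linarith)]

lemma betaFun_mono : Monotone betaFun := by
  intro x y hxy
  by_cases hx : x ∈ Set.Ioo (1/2 : ℝ) 1 <;> by_cases hy : y ∈ Set.Ioo (1/2 : ℝ) 1
  · have hsx := betaFun_spec hx
    have hsy := betaFun_spec hy
    rcases eq_or_lt_of_le hxy with rfl | hlt
    · exact le_refl _
    · by_contra hc
      push_neg at hc
      have h1 : gFun (betaFun y) < gFun (betaFun x) :=
        gFun_strictMonoOn (betaFun_mem hy) (betaFun_mem hx) hc
      have h2 : gFun x < gFun y := gFun_strictMonoOn hx hy hlt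
      rw [hsx.2.2, hsy.2.2] at h1
      linarith
  · have hy2 : 1 ≤ y := by
      simp only [Set.mem_Ioo, not_and, not_lt] at hy
      exact hy (lt_of_lt_of_le hx.1 hxy)
    rw [betaFun_eq_one hy2]
    exact le_of_lt (betaFun_spec hx).2.1
  · have hx1 : x ≤ 1/2 := by
      simp only [Set.mem_Ioo, not_and, not_lt] at hx
      by_contra h
      push_neg at h
      linarith [hx h, hy.2, hxy]
    rw [betaFun_eq_half hx1]
    exact le_of_lt (betaFun_mem hy).1
  · simp only [Set.mem_Ioo, not_and, not_lt] at hx hy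
    by_cases hx1 : x ≤ 1/2
    · rw [betaFun_eq_half hx1]
      by_cases hy1 : y ≤ 1/2
      · rw [betaFun_eq_half hy1]
      · push_neg at hy1
        rw [betaFun_eq_one (hy hy1)]
        norm_num
    · push_neg at hx1
      have hx2 : 1 ≤ x := hx hx1
      have hy2 : 1 ≤ y := le_trans hx2 hxy
      rw [betaFun_eq_one hx2, betaFun_eq_one hy2]

lemma oneD_integral {a b : ℝ} (hab : a < b) (hb : b < 1) :
    ENNReal.ofReal (Real.log (1 - a) - Real.log (1 - b))
      ≤ ∫⁻ z in Set.Ioo a b, ENNReal.ofReal (1 - z)⁻¹ := by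
  have hne : ∀ z ∈ Set.Icc a b, (1 : ℝ) - z ≠ 0 := by
    intro z hz; have := hz.2; intro h; rw [sub_eq_zero] at h; linarith
  have hcont : ContinuousOn (fun z => (1 - z)⁻¹) (Set.Icc a b) :=
    ContinuousOn.inv₀ (by fun_prop) hne
  have hint : IntegrableOn (fun z => (1 - z)⁻¹) (Set.Ioo a b) :=
    (hcont.integrableOn_Icc).mono_set Set.Ioo_subset_Icc_self
  have h0 : 0 ≤ᶠ[ae (volume.restrict (Set.Ioo a b))] fun z => (1 - z)⁻¹ := by
    rw [Filter.EventuallyLE, ae_restrict_iff' measurableSet_Ioo]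
    apply Filter.Eventually.of_forall
    intro z hz
    have : (0:ℝ) < 1 - z := by linarith [hz.2]
    positivity
  rw [← MeasureTheory.ofReal_integral_eq_lintegral_ofReal hint h0]
  apply ENNReal.ofReal_le_ofReal
  have hderiv : ∀ x ∈ Set.uIcc a b, HasDerivAt (fun z => -Real.log (1 - z)) ((1 - x)⁻¹) x := by
    intro x hx
    rw [Set.uIcc_of_le hab.le] at hx
    have h1 : HasDerivAt (fun z : ℝ => 1 - z) (-1) x := by
      simpa using (hasDerivAt_id x).const_sub 1
    have h2 := (Real.hasDerivAt_log (hne x hx)).comp x h1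
    have h3 := h2.neg
    exact h3.congr_deriv (by ring)
  have hii : IntervalIntegrable (fun z => (1 - z)⁻¹) volume a b := by
    apply ContinuousOn.intervalIntegrable
    rwa [Set.uIcc_of_le hab.le]
  have hftc := intervalIntegral.integral_eq_sub_of_hasDerivAt hderiv hii
  have heq : ∫ z in Set.Ioo a b, (1 - z)⁻¹ = ∫ z in a..b, (1 - z)⁻¹ := by
    rw [intervalIntegral.integral_of_le hab.le, MeasureTheory.integral_Ioc_eq_integral_Ioo]
  rw [heq, hftc]
  ring_nf
  exact le_refl _

lemma lint_top {T c : ℝ} (hT : T < 1) (hc : 0 < c) :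
    ∫⁻ x in Set.Ioo T 1, ENNReal.ofReal (c * (1 - x)⁻¹) = ⊤ := by
  have hKtop : ∫⁻ x in Set.Ioo T 1, ENNReal.ofReal (1 - x)⁻¹ = ⊤ := by
    by_contra hne
    set K := ∫⁻ x in Set.Ioo T 1, ENNReal.ofReal (1 - x)⁻¹ with hK
    have hbound : ∀ M : ℝ, ENNReal.ofReal M ≤ K := by
      intro M
      set b := 1 - (1 - T) * Real.exp (-(|M| + 1)) with hbdef
      have hT1 : (0:ℝ) < 1 - T := by linarith
      have hexp : Real.exp (-(|M| + 1)) < 1 := by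
        rw [Real.exp_lt_one_iff]
        linarith [abs_nonneg M]
      have hexp0 : 0 < Real.exp (-(|M| + 1)) := Real.exp_pos _
      have hTb : T < b := by
        have : (1 - T) * Real.exp (-(|M| + 1)) < 1 - T := by nlinarith
        simp only [hbdef]; linarith
      have hb1 : b < 1 := by
        simp only [hbdef]; nlinarith
      have hloga : Real.log (1 - b) = Real.log (1 - T) - (|M| + 1) := by
        simp only [hbdef, sub_sub_cancel]
        rw [Real.log_mul (ne_of_gt hT1) (ne_of_gt hexp0), Real.log_exp]
        ring
      calc ENNReal.ofReal M ≤ ENNReal.ofReal (Real.log (1 - T) - Real.log (1 - b)) := by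
            apply ENNReal.ofReal_le_ofReal
            rw [hloga]
            have := le_abs_self M
            linarith
        _ ≤ ∫⁻ x in Set.Ioo T b, ENNReal.ofReal (1 - x)⁻¹ := oneD_integral hTb hb1
        _ ≤ K := lintegral_mono_set (Set.Ioo_subset_Ioo le_rfl hb1.le)
    have h1 : K < ENNReal.ofReal (K.toReal + 1) := by
      conv_lhs => rw [← ENNReal.ofReal_toReal hne]
      exact (ENNReal.ofReal_lt_ofReal_iff (by positivity)).2 (by linarith)
    exact absurd (hbound (K.toReal + 1)) (not_le.2 h1)
  have : ∀ x, ENNReal.ofReal (c * (1 - x)⁻¹) = ENNReal.ofReal c * ENNReal.ofReal (1 - x)⁻¹ :=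
    fun x => ENNReal.ofReal_mul hc.le
  simp_rw [this]
  rw [lintegral_const_mul' _ _ ENNReal.ofReal_ne_top, hKtop,
    ENNReal.mul_top (ENNReal.ofReal_pos.2 hc).ne']

lemma pi_mem_iff {m : ℕ} {s : Set ℝ} (x : ℝ) (y : Fin m → ℝ) :
    (Fin.insertNth 0 x y ∈ Set.pi Set.univ (fun _ : Fin (m+1) => s))
      ↔ (x ∈ s ∧ ∀ i, y i ∈ s) := by
  simp only [Set.mem_pi, Set.mem_univ, forall_true_left, true_implies]
  rw [Fin.forall_fin_succ]
  constructor
  · rintro ⟨h0, hs⟩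
    refine ⟨by simpa using h0, fun i => ?_⟩
    have h1 := hs i
    have hsa : Fin.succAbove (0 : Fin (m+1)) i = i.succ := congrFun Fin.succAbove_zero i
    rwa [← hsa, Fin.insertNth_apply_succAbove] at h1
  · rintro ⟨h0, hs⟩
    refine ⟨by simpa using h0, fun i => ?_⟩
    have hsa : Fin.succAbove (0 : Fin (m+1)) i = i.succ := congrFun Fin.succAbove_zero i
    rw [← hsa, Fin.insertNth_apply_succAbove]
    exact hs i

lemma boxProd (n : ℕ) {s : Set ℝ} (h : ℝ → ENNReal) (hh : Measurable h) :
    ∫⁻ y in Set.pi Set.univ (fun _ : Fin n => s), (∏ i, h (y i))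
      = (∫⁻ t in s, h t) ^ n := by
  induction n with
  | zero =>
    simp only [Finset.univ_eq_empty, Finset.prod_empty, pow_zero]
    rw [lintegral_one]
    have huniv : (Set.pi Set.univ (fun _ : Fin 0 => s)) = Set.univ := by
      ext y; simp
    rw [huniv, Measure.restrict_univ, MeasureTheory.volume_pi, Measure.pi_univ]
    simp
  | succ m ih =>
    set e := MeasurableEquiv.piFinSuccAbove (fun _ : Fin (m+1) => ℝ) 0 with he
    have mp : MeasurePreserving (⇑e) volume volume :=
      MeasureTheory.volume_preserving_piFinSuccAbove (fun _ : Fin (m+1) => ℝ) 0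
    have key : ∀ y : Fin (m+1) → ℝ,
        (∏ i, h (y i)) = (fun z : ℝ × (Fin m → ℝ) => h z.1 * ∏ i, h (z.2 i)) (e y) := by
      intro y
      have h1 : (e y).1 = y 0 := rfl
      have h2 : ∀ i : Fin m, (e y).2 i = y (Fin.succAbove 0 i) := fun i => rfl
      rw [Fin.prod_univ_succ]
      simp only [h1, h2, Fin.succAbove_zero]
    have himg : ⇑e '' (Set.pi Set.univ (fun _ : Fin (m+1) => s))
        = s ×ˢ (Set.pi Set.univ (fun _ : Fin m => s)) := by
      rw [MeasurableEquiv.image_eq_preimage_symm]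
      ext z
      rw [Set.mem_preimage]
      have hsymm : e.symm z = Fin.insertNth 0 z.1 z.2 := by
        rw [he, MeasurableEquiv.piFinSuccAbove_symm_apply]
        rfl
      rw [hsymm]
      rw [pi_mem_iff]
      simp [Set.mem_prod, Set.mem_pi]
    calc ∫⁻ y in Set.pi Set.univ (fun _ : Fin (m+1) => s), (∏ i, h (y i))
        = ∫⁻ y in Set.pi Set.univ (fun _ : Fin (m+1) => s),
            (fun z : ℝ × (Fin m → ℝ) => h z.1 * ∏ i, h (z.2 i)) (e y) := by
          exact lintegral_congr key
      _ = ∫⁻ z in ⇑e '' (Set.pi Set.univ (fun _ : Fin (m+1) => s)),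
            h z.1 * ∏ i, h (z.2 i) := by
          exact mp.setLIntegral_comp_emb e.measurableEmbedding
            (fun z : ℝ × (Fin m → ℝ) => h z.1 * ∏ i, h (z.2 i))
            (Set.pi Set.univ (fun _ : Fin (m+1) => s))
      _ = ∫⁻ z in s ×ˢ (Set.pi Set.univ (fun _ : Fin m => s)),
            h z.1 * ∏ i, h (z.2 i) := by rw [himg]
      _ = (∫⁻ t in s, h t) * (∫⁻ y in Set.pi Set.univ (fun _ : Fin m => s), ∏ i, h (y i)) := by
          rw [MeasureTheory.Measure.volume_eq_prod, ← Measure.prod_restrict]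
          exact lintegral_prod_mul hh.aemeasurable
            ((Finset.measurable_prod Finset.univ
              (fun i _ => hh.comp (measurable_pi_apply i))).aemeasurable)
      _ = (∫⁻ t in s, h t) ^ (m + 1) := by rw [ih, pow_succ, mul_comm]

lemma mainCalc (n : ℕ) (T : ℝ) (hT2 : 1/2 < T) (hT1 : T < 1) :
    ∫⁻ r in (⇑(MeasurableEquiv.piFinSuccAbove (fun _ : Fin (n+1) => ℝ) 0)) ⁻¹'
        {z : ℝ × (Fin n → ℝ) | z.1 ∈ Set.Ioo T 1 ∧
          ∀ i, z.2 i ∈ Set.Ioo (2 * betaFun z.1 - 1) (betaFun z.1)},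
      ENNReal.ofReal (∏ j, (1 - r j)⁻¹) = ⊤ := by
  set e := MeasurableEquiv.piFinSuccAbove (fun _ : Fin (n+1) => ℝ) 0 with he
  have mp : MeasurePreserving (⇑e) volume volume :=
    MeasureTheory.volume_preserving_piFinSuccAbove (fun _ : Fin (n+1) => ℝ) 0
  set Q : Set (ℝ × (Fin n → ℝ)) := {z | z.1 ∈ Set.Ioo T 1 ∧
    ∀ i, z.2 i ∈ Set.Ioo (2 * betaFun z.1 - 1) (betaFun z.1)} with hQ
  have hβmeas : Measurable betaFun := betaFun_mono.measurable
  have hQmeas : MeasurableSet Q := by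
    have h1 : MeasurableSet {z : ℝ × (Fin n → ℝ) | z.1 ∈ Set.Ioo T 1} :=
      measurable_fst measurableSet_Ioo
    have h2 : ∀ i : Fin n, MeasurableSet {z : ℝ × (Fin n → ℝ) |
        z.2 i ∈ Set.Ioo (2 * betaFun z.1 - 1) (betaFun z.1)} := by
      intro i
      have ha : Measurable fun z : ℝ × (Fin n → ℝ) => 2 * betaFun z.1 - 1 :=
        (((hβmeas.comp measurable_fst).const_mul 2).sub measurable_const)
      have hb : Measurable fun z : ℝ × (Fin n → ℝ) => z.2 i :=
        (measurable_pi_apply i).comp measurable_snd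
      have hc : Measurable fun z : ℝ × (Fin n → ℝ) => betaFun z.1 :=
        hβmeas.comp measurable_fst
      exact (measurableSet_lt ha hb).inter (measurableSet_lt hb hc)
    have : Q = {z : ℝ × (Fin n → ℝ) | z.1 ∈ Set.Ioo T 1} ∩ ⋂ i, {z |
        z.2 i ∈ Set.Ioo (2 * betaFun z.1 - 1) (betaFun z.1)} := by
      ext z; simp [hQ, Set.mem_iInter, forall_and]
    rw [this]
    exact h1.inter (MeasurableSet.iInter h2)
  set F : ℝ × (Fin n → ℝ) → ENNReal := fun z =>
    ENNReal.ofReal (1 - z.1)⁻¹ * ∏ i, ENNReal.ofReal (1 - z.2 i)⁻¹ with hF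
  have hFmeas : Measurable F := by
    apply Measurable.mul
    · exact ((measurable_const.sub measurable_fst).inv).ennreal_ofReal
    · apply Finset.measurable_prod
      intro i _
      exact ((measurable_const.sub ((measurable_pi_apply i).comp measurable_snd)).inv).ennreal_ofReal
  set G : ℝ × (Fin n → ℝ) → ENNReal := fun z =>
    ENNReal.ofReal ((1 - z.1)⁻¹ * ∏ i, (1 - z.2 i)⁻¹) with hG
  have step1 : ∫⁻ r in ⇑e ⁻¹' Q, ENNReal.ofReal (∏ j, (1 - r j)⁻¹) = ∫⁻ z in Q, G z := by
    have key : ∀ r : Fin (n+1) → ℝ, ENNReal.ofReal (∏ j, (1 - r j)⁻¹) = G (e r) := by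
      intro r
      have h1 : (e r).1 = r 0 := rfl
      have h2 : ∀ i : Fin n, (e r).2 i = r (Fin.succAbove 0 i) := fun i => rfl
      simp only [hG, h1, h2, Fin.succAbove_zero]
      congr 1
      rw [Fin.prod_univ_succ]
    calc ∫⁻ r in ⇑e ⁻¹' Q, ENNReal.ofReal (∏ j, (1 - r j)⁻¹)
        = ∫⁻ r in ⇑e ⁻¹' Q, G (e r) := lintegral_congr key
      _ = ∫⁻ z in ⇑e '' (⇑e ⁻¹' Q), G z := mp.setLIntegral_comp_emb e.measurableEmbedding _ _
      _ = ∫⁻ z in Q, G z := by rw [Set.image_preimage_eq Q e.surjective]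
  have step2 : ∫⁻ z in Q, G z = ∫⁻ z in Q, F z := by
    apply setLIntegral_congr_fun hQmeas
    intro z hz
    obtain ⟨hz1, hz2⟩ := hz
    have hx1 : z.1 ∈ Set.Ioo (1/2 : ℝ) 1 := ⟨lt_trans hT2 hz1.1, hz1.2⟩
    have hβ1 : betaFun z.1 < 1 := (betaFun_spec hx1).2.1
    have hnn : ∀ i ∈ Finset.univ, (0:ℝ) ≤ (1 - z.2 i)⁻¹ := by
      intro i _
      have h6 : (0:ℝ) < 1 - z.2 i := by linarith [(hz2 i).2, hβ1]
      exact inv_nonneg.2 h6.le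
    simp only [hG, hF]
    rw [ENNReal.ofReal_mul (inv_nonneg.2 (by linarith [hz1.2] : (0:ℝ) ≤ 1 - z.1)),
      ENNReal.ofReal_prod_of_nonneg hnn]
  have step3 : ∫⁻ z in Q, F z
      = ∫⁻ x, ∫⁻ y, Q.indicator F (x, y) := by
    rw [← lintegral_indicator hQmeas, MeasureTheory.Measure.volume_eq_prod]
    exact lintegral_prod _ (hFmeas.indicator hQmeas).aemeasurable
  have step4 : ∀ x : ℝ, (∫⁻ y, Q.indicator F (x, y))
      = (Set.Ioo T 1).indicator (fun x => ENNReal.ofReal (1 - x)⁻¹ *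
          (∫⁻ t in Set.Ioo (2 * betaFun x - 1) (betaFun x), ENNReal.ofReal (1 - t)⁻¹) ^ n) x := by
    intro x
    by_cases hx : x ∈ Set.Ioo T 1
    · rw [Set.indicator_of_mem hx]
      have hbox : ∀ y : Fin n → ℝ, Q.indicator F (x, y)
          = (Set.pi Set.univ fun _ : Fin n =>
              Set.Ioo (2 * betaFun x - 1) (betaFun x)).indicator
              (fun y => ENNReal.ofReal (1 - x)⁻¹ * ∏ i, ENNReal.ofReal (1 - y i)⁻¹) y := by
        intro y
        by_cases hy : y ∈ Set.pi Set.univ fun _ : Fin n =>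
            Set.Ioo (2 * betaFun x - 1) (betaFun x)
        · rw [Set.indicator_of_mem hy, Set.indicator_of_mem]
          constructor
          · exact hx
          · intro i
            exact hy i (Set.mem_univ i)
        · rw [Set.indicator_of_notMem hy, Set.indicator_of_notMem]
          intro hc
          exact hy (fun i _ => hc.2 i)
      rw [lintegral_congr hbox, lintegral_indicator (MeasurableSet.univ_pi
        (fun _ => measurableSet_Ioo)), lintegral_const_mul' _ _ ENNReal.ofReal_ne_top,
        boxProd n (fun t : ℝ => ENNReal.ofReal (1 - t)⁻¹) (by fun_prop)]
    · rw [Set.indicator_of_notMem hx]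
      have : ∀ y : Fin n → ℝ, Q.indicator F (x, y) = 0 := by
        intro y
        apply Set.indicator_of_notMem
        intro hc
        exact hx hc.1
      rw [lintegral_congr this, lintegral_zero]
  have hlog2 : (0:ℝ) < Real.log 2 := Real.log_pos (by norm_num)
  have step6 : ∫⁻ x in Set.Ioo T 1, (fun x => ENNReal.ofReal (1 - x)⁻¹ *
      (∫⁻ t in Set.Ioo (2 * betaFun x - 1) (betaFun x), ENNReal.ofReal (1 - t)⁻¹) ^ n) x = ⊤ := by
    rw [eq_top_iff, ← lint_top (T := T) (c := Real.log 2 ^ n) hT1 (by positivity)]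
    apply lintegral_mono_ae
    rw [ae_restrict_iff' measurableSet_Ioo]
    apply Filter.Eventually.of_forall
    intro x hx
    have hx1 : x ∈ Set.Ioo (1/2 : ℝ) 1 := ⟨lt_trans hT2 hx.1, hx.2⟩
    obtain ⟨hxβ, hβ1, _⟩ := betaFun_spec hx1
    have hab : 2 * betaFun x - 1 < betaFun x := by linarith
    have hsub : Real.log (1 - (2 * betaFun x - 1)) - Real.log (1 - betaFun x) = Real.log 2 := by
      have h2 : 1 - (2 * betaFun x - 1) = 2 * (1 - betaFun x) := by ring
      rw [h2, Real.log_mul (by norm_num) (by linarith)]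
      ring
    have hIx : ENNReal.ofReal (Real.log 2)
        ≤ ∫⁻ t in Set.Ioo (2 * betaFun x - 1) (betaFun x), ENNReal.ofReal (1 - t)⁻¹ := by
      rw [← hsub]
      exact oneD_integral hab hβ1
    calc ENNReal.ofReal (Real.log 2 ^ n * (1 - x)⁻¹)
        = ENNReal.ofReal (Real.log 2 ^ n) * ENNReal.ofReal (1 - x)⁻¹ := by
          rw [ENNReal.ofReal_mul (by positivity)]
      _ = ENNReal.ofReal (Real.log 2) ^ n * ENNReal.ofReal (1 - x)⁻¹ := by
          rw [ENNReal.ofReal_pow hlog2.le]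
      _ ≤ (∫⁻ t in Set.Ioo (2 * betaFun x - 1) (betaFun x),
            ENNReal.ofReal (1 - t)⁻¹) ^ n * ENNReal.ofReal (1 - x)⁻¹ := by
          apply mul_le_mul_left
          exact pow_le_pow_left' hIx n
      _ = ENNReal.ofReal (1 - x)⁻¹ * (∫⁻ t in Set.Ioo (2 * betaFun x - 1) (betaFun x),
            ENNReal.ofReal (1 - t)⁻¹) ^ n := mul_comm _ _
  rw [step1, step2, step3]
  rw [show (∫⁻ x, ∫⁻ y, Q.indicator F (x, y)) = ∫⁻ x, (Set.Ioo T 1).indicator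
    (fun x => ENNReal.ofReal (1 - x)⁻¹ * (∫⁻ t in Set.Ioo (2 * betaFun x - 1) (betaFun x),
      ENNReal.ofReal (1 - t)⁻¹) ^ n) x from lintegral_congr step4]
  rw [lintegral_indicator measurableSet_Ioo]
  exact step6

theorem statement17 (p : ℕ) [NeZero p] (hp : 2 ≤ p) (ginv : ℝ → ℝ) (tstar : ℝ)
    (hts : tstar ∈ Set.Ioo (1/2 : ℝ) 1)
    (hmem : ∀ y, 0 < y → ginv y ∈ Set.Ioo (1/2 : ℝ) 1)
    (hinv : ∀ t ∈ Set.Ioo (1/2 : ℝ) 1, ginv (gFun t) = t)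
    (hkey : ∀ t ∈ Set.Ioo tstar 1,
      ginv (3 * gFun t) - ginv (gFun t / 3) > 1 - ginv (3 * gFun t)) :
    (∫⁻ r in Estar p ginv tstar, ENNReal.ofReal (∏ i, (1 - r i)⁻¹)) =
      (∫⁻ r₁ in Set.Ioo tstar 1, ENNReal.ofReal
        (Real.log ((1 - ginv (gFun r₁ / 3)) / (1 - ginv (3 * gFun r₁))) ^ (p - 1) *
          (1 - r₁)⁻¹)) ∧
    (∫⁻ r in Estar p ginv tstar, ENNReal.ofReal (∏ i, (1 - r i)⁻¹)) = ⊤ ∧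
    ∀ r₀ : Fin p → ℝ, (∀ j, r₀ j ∈ Set.Ico (0:ℝ) 1) →
      (∀ j, r₀ j < ginv (gFun tstar / 3)) →
      ∫⁻ r in Estar p ginv tstar ∩ {s | ∀ j, r₀ j ≤ s j},
        ENNReal.ofReal (∏ i, (1 - r i)⁻¹) = ⊤ := by
  obtain ⟨n, rfl⟩ : ∃ n, p = n + 1 := ⟨p - 1, by omega⟩
  have hlog2 : (0:ℝ) < Real.log 2 := Real.log_pos (by norm_num)
  -- Core claim
  have core : ∀ r₀ : Fin (n+1) → ℝ, (∀ j, r₀ j < 1) →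
      ∫⁻ r in Estar (n+1) ginv tstar ∩ {s | ∀ j, r₀ j ≤ s j},
        ENNReal.ofReal (∏ i, (1 - r i)⁻¹) = ⊤ := by
    intro r₀ hr₀
    set m : ℝ := Finset.univ.sup' Finset.univ_nonempty r₀ with hm
    have hm1 : m < 1 := (Finset.sup'_lt_iff Finset.univ_nonempty).2 (fun j _ => hr₀ j)
    have hmle : ∀ j, r₀ j ≤ m := fun j => Finset.le_sup' r₀ (Finset.mem_univ j)
    set T : ℝ := max tstar ((1 + m) / 2) with hTdef
    have hT2 : 1/2 < T := lt_of_lt_of_le hts.1 (le_max_left _ _)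
    have hT1 : T < 1 := max_lt hts.2 (by linarith)
    have hTs : tstar ≤ T := le_max_left _ _
    have hTm : m ≤ 2 * T - 1 := by
      have := le_max_right tstar ((1 + m) / 2)
      have h7 : (1 + m) / 2 ≤ T := this
      linarith
    have htop := mainCalc n T hT2 hT1
    rw [eq_top_iff, ← htop]
    apply lintegral_mono_set
    intro r hr
    rw [Set.mem_preimage] at hr
    obtain ⟨hr1, hr2⟩ := hr
    have h01 : (MeasurableEquiv.piFinSuccAbove (fun _ : Fin (n+1) => ℝ) 0 r).1 = r 0 := rfl
    have h02 : ∀ i : Fin n, (MeasurableEquiv.piFinSuccAbove (fun _ : Fin (n+1) => ℝ) 0 r).2 i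
        = r (Fin.succAbove 0 i) := fun i => rfl
    rw [h01] at hr1 hr2
    have hr2' : ∀ i : Fin n, r i.succ ∈ Set.Ioo (2 * betaFun (r 0) - 1) (betaFun (r 0)) := by
      intro i
      have := hr2 i
      rw [h02 i] at this
      rwa [congrFun Fin.succAbove_zero i] at this
    have hr0mem : r 0 ∈ Set.Ioo (1/2 : ℝ) 1 := ⟨lt_trans hT2 hr1.1, hr1.2⟩
    have hr0ts : r 0 ∈ Set.Ioo tstar 1 := ⟨lt_of_le_of_lt hTs hr1.1, hr1.2⟩
    obtain ⟨hb1, hb2, hb3⟩ := betaFun_spec hr0mem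
    have hBinv : ginv (3 * gFun (r 0)) = betaFun (r 0) := by
      rw [← hb3, hinv _ (betaFun_mem hr0mem)]
    have hkey' := hkey (r 0) hr0ts
    rw [hBinv] at hkey'
    have hA : ginv (gFun (r 0) / 3) < 2 * betaFun (r 0) - 1 := by linarith
    -- coordinates j ≠ 0
    have hcoord : ∀ j : Fin (n+1), j ≠ 0 →
        r j ∈ Set.Ioo (2 * betaFun (r 0) - 1) (betaFun (r 0)) := by
      intro j hj
      obtain ⟨i, rfl⟩ := Fin.exists_succ_eq.2 hj
      exact hr2' i
    constructor
    · refine ⟨?_, hr0ts, ?_⟩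
      · intro j
        by_cases hj : j = 0
        · subst hj
          exact ⟨by linarith [hr1.1], hr1.2⟩
        · obtain ⟨hl, hu⟩ := hcoord j hj
          constructor
          · have : (1/2 : ℝ) < betaFun (r 0) := (betaFun_mem hr0mem).1
            linarith
          · linarith
      · intro i hi
        obtain ⟨hl, hu⟩ := hcoord i hi
        rw [hBinv]
        exact ⟨lt_of_lt_of_le hA hl.le, hu⟩
    · intro j
      by_cases hj : j = 0
      · subst hj
        have : m ≤ T := by linarith
        linarith [hmle (0 : Fin (n+1)), hr1.1]
      · obtain ⟨hl, _⟩ := hcoord j hj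
        have : 2 * T - 1 < 2 * betaFun (r 0) - 1 := by linarith [hr1.1]
        linarith [hmle j]
  -- part 2
  have part2 : ∫⁻ r in Estar (n+1) ginv tstar, ENNReal.ofReal (∏ i, (1 - r i)⁻¹) = ⊤ := by
    have h := core (fun _ => 0) (fun _ => one_pos)
    have heq : Estar (n+1) ginv tstar ∩ {s : Fin (n+1) → ℝ | ∀ j, (fun _ => (0:ℝ)) j ≤ s j}
        = Estar (n+1) ginv tstar := by
      apply Set.inter_eq_left.2
      intro r hr j
      exact (hr.1 j).1
    rwa [heq] at h
  -- RHS = ⊤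
  have hRHS : (∫⁻ r₁ in Set.Ioo tstar 1, ENNReal.ofReal
      (Real.log ((1 - ginv (gFun r₁ / 3)) / (1 - ginv (3 * gFun r₁))) ^ ((n+1) - 1) *
        (1 - r₁)⁻¹)) = ⊤ := by
    rw [eq_top_iff, ← lint_top (T := tstar) (c := Real.log 2 ^ n) hts.2 (by positivity)]
    apply lintegral_mono_ae
    rw [ae_restrict_iff' measurableSet_Ioo]
    apply Filter.Eventually.of_forall
    intro x hx
    have hxmem : x ∈ Set.Ioo (1/2 : ℝ) 1 := ⟨lt_trans hts.1 hx.1, hx.2⟩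
    have hgpos : 0 < gFun x := gFun_pos hxmem
    have hAmem := hmem (gFun x / 3) (by linarith)
    have hBmem := hmem (3 * gFun x) (by linarith)
    have hkx := hkey x hx
    have h1B : (0:ℝ) < 1 - ginv (3 * gFun x) := by linarith [hBmem.2]
    have h1A : (0:ℝ) < 1 - ginv (gFun x / 3) := by linarith [hAmem.2]
    have hratio : (2:ℝ) ≤ (1 - ginv (gFun x / 3)) / (1 - ginv (3 * gFun x)) := by
      rw [le_div_iff₀ h1B]
      linarith
    have hL : Real.log 2 ≤ Real.log ((1 - ginv (gFun x / 3)) / (1 - ginv (3 * gFun x))) :=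
      Real.log_le_log (by norm_num) hratio
    apply ENNReal.ofReal_le_ofReal
    have hpow : Real.log 2 ^ n
        ≤ Real.log ((1 - ginv (gFun x / 3)) / (1 - ginv (3 * gFun x))) ^ ((n+1) - 1) := by
      simp only [Nat.add_sub_cancel]
      exact pow_le_pow_left₀ hlog2.le hL n
    apply mul_le_mul_of_nonneg_right hpow
    have : (0:ℝ) < 1 - x := by linarith [hx.2]
    exact inv_nonneg.2 this.le
  exact ⟨by rw [part2, hRHS], part2, fun r₀ h1 _ => core r₀ (fun j => (h1 j).2)⟩
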